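/- Any (α,β)-admissible smoothing of the nuclear norm must satisfy αβ ≥ 1/2. That is, if a family of functions Ψ̃(·;L) parametrized by PSD matrices L satisfies dominance (Ψ̃(X;L) ≥ ||X||_* and Ψ̃(X;0) = ||X||_*), upper stability (Ψ̃(X;L₂) − Ψ̃(X;L₁) ≤ α(tr L₂ − tr L₁) for L₁ ⪯ L₂), and β-smoothness (the Bregman divergence of Ψ̃(·;L) satisfies D(Y,X) ≤ (β/2) tr((X−Y)^T L^{-1}(X−Y)) for L ≻ 0), then αβ ≥ 1/2. -/

import Mathlib

open Matrix Finset
open scoped Classical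

noncomputable def psqrt {m : ℕ} (A : Matrix (Fin m) (Fin m) ℝ) : Matrix (Fin m) (Fin m) ℝ :=
  if h : A.PosSemidef then (h.1.eigenvectorUnitary : Matrix (Fin m) (Fin m) ℝ) *
    diagonal (((↑) : ℝ → ℝ) ∘ Real.sqrt ∘ h.1.eigenvalues) *
    (star h.1.eigenvectorUnitary : Matrix (Fin m) (Fin m) ℝ) else 0

noncomputable def nuclearNorm {m : ℕ} {n : Type*} [Fintype n]
    (A : Matrix (Fin m) n ℝ) : ℝ :=
  (psqrt (A * Aᵀ)).trace

noncomputable def ip {m : ℕ} {n : Type*} [Fintype n] (A B : Matrix (Fin m) n ℝ) : ℝ :=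
  (Aᵀ * B).trace

lemma psqrt_idem {m : ℕ} {A : Matrix (Fin m) (Fin m) ℝ} (h : A.PosSemidef)
    (hI : A ^ 2 = A) : psqrt A = A := by
  rw [psqrt, dif_pos h]
  have hfun : (((↑) : ℝ → ℝ) ∘ Real.sqrt ∘ h.1.eigenvalues)
      = (RCLike.ofReal : ℝ → ℝ) ∘ h.1.eigenvalues := by
    funext i
    have hv := h.1.mulVec_eigenvectorBasis i
    set v := h.1.eigenvectorBasis i with hvdef
    set l := h.1.eigenvalues i
    have hl0 : 0 ≤ l := h.eigenvalues_nonneg i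
    have hv2 : (A ^ 2) *ᵥ ⇑v = (l * l) • ⇑v := by
      rw [pow_two, ← Matrix.mulVec_mulVec, hv, Matrix.mulVec_smul, hv, smul_smul]
    rw [hI, hv] at hv2
    have hne : (⇑v : Fin m → ℝ) ≠ 0 := by
      intro h0
      have : v = 0 := by ext j; simp [h0]
      have hn := h.1.eigenvectorBasis.orthonormal.1 i
      rw [← hvdef, this] at hn
      simp at hn
    have hll : l * l = l := by
      by_contra hc
      apply hne
      have : (l * l - l) • (⇑v : Fin m → ℝ) = 0 := by rw [sub_smul, ← hv2, sub_self]
      exact (smul_eq_zero.mp this).resolve_left (sub_ne_zero.mpr hc)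
    simp only [Function.comp_apply, RCLike.ofReal_real_eq_id, id]
    have hs : Real.sqrt l = l := by
      calc Real.sqrt l = Real.sqrt (l * l) := by rw [hll]
        _ = l := Real.sqrt_mul_self hl0
    exact hs
  rw [hfun]
  conv_rhs => rw [h.1.spectral_theorem]
  rw [Unitary.conjStarAlgAut_apply]

lemma nuclearNorm_zero {m n : ℕ} : nuclearNorm (0 : Matrix (Fin m) (Fin n) ℝ) = 0 := by
  unfold nuclearNorm
  rw [Matrix.zero_mul]
  rw [psqrt_idem Matrix.PosSemidef.zero (by simp)]
  simp

lemma nuclearNorm_neg {m n : ℕ} (X : Matrix (Fin m) (Fin n) ℝ) :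
    nuclearNorm (-X) = nuclearNorm X := by
  unfold nuclearNorm
  rw [Matrix.transpose_neg, Matrix.neg_mul, Matrix.mul_neg, neg_neg]

lemma nuclearNorm_std {m n : ℕ} (hm : 0 < m) (hn : 0 < n) :
    nuclearNorm (single (⟨0,hm⟩ : Fin m) (⟨0,hn⟩ : Fin n) (1:ℝ)) = 1 := by
  unfold nuclearNorm
  have h1 : (single (⟨0,hm⟩ : Fin m) (⟨0,hn⟩ : Fin n) (1:ℝ))ᵀ
      = single (⟨0,hn⟩ : Fin n) (⟨0,hm⟩ : Fin m) (1:ℝ) := by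
    ext i j; simp [Matrix.single, and_comm]
  have h2 : single (⟨0,hm⟩ : Fin m) (⟨0,hn⟩ : Fin n) (1:ℝ) *
      single (⟨0,hn⟩ : Fin n) (⟨0,hm⟩ : Fin m) (1:ℝ)
      = single (⟨0,hm⟩ : Fin m) (⟨0,hm⟩ : Fin m) (1:ℝ) := by
    ext i j
    simp only [Matrix.mul_apply, Matrix.single, Matrix.of_apply, ite_and]
    by_cases hi : (⟨0,hm⟩:Fin m) = i <;> by_cases hj : (⟨0,hm⟩:Fin m) = j <;>
      simp [hi, hj]
  rw [h1, h2]
  rw [psqrt_idem ?psd ?idem]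
  case psd =>
    refine ⟨?_, fun x => ?_⟩
    · ext i j
      simp only [Matrix.conjTranspose_apply, Matrix.single, Matrix.of_apply, star_trivial]
      by_cases hi : (⟨0,hm⟩:Fin m) = i <;> by_cases hj : (⟨0,hm⟩:Fin m) = j <;>
        simp [hi, hj]
    · simp only [Matrix.single, dotProduct, Matrix.mulVec, Matrix.of_apply,
        star_trivial, ite_and, RCLike.re_to_real]
      have hsq : (x.sum fun i xi => x.sum fun j xj => (xi * if (⟨0, hm⟩ : Fin m) = i then if (⟨0, hm⟩ : Fin m) = j then 1 else 0 else 0) * xj)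
          = (x.sum fun i xi => if (⟨0, hm⟩ : Fin m) = i then xi else 0) *
            (x.sum fun j xj => if (⟨0, hm⟩ : Fin m) = j then xj else 0) := by
        simp only [Finsupp.sum, Finset.sum_mul_sum]
        refine Finset.sum_congr rfl fun i _ => Finset.sum_congr rfl fun j _ => ?_
        split_ifs <;> simp
      rw [hsq]
      exact mul_self_nonneg _
  case idem =>
    rw [pow_two]
    ext i j
    simp only [Matrix.mul_apply, Matrix.single, Matrix.of_apply, ite_and]
    by_cases hi : (⟨0,hm⟩:Fin m) = i <;> by_cases hj : (⟨0,hm⟩:Fin m) = j <;>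
      simp [hi, hj]
  simp [Matrix.trace, Matrix.diag, Matrix.single]

/-- any `(α,β)`-admissible smoothing of the nuclear norm satisfies
`αβ ≥ 1/2`.  Here `Ψ(·;L)` is parametrized by PSD matrices `L`, `g X L` denotes its
gradient in `X` (characterized through directional derivatives), and the hypotheses
are dominance, upper stability with constant `α`, and `β`-smoothness of the Bregman
divergence. -/
theorem stmt6 {m n : ℕ} (hm : 0 < m) (hn : 0 < n) (α β : ℝ)
    (Ψ : Matrix (Fin m) (Fin n) ℝ → Matrix (Fin m) (Fin m) ℝ → ℝ)
    (g : Matrix (Fin m) (Fin n) ℝ → Matrix (Fin m) (Fin m) ℝ → Matrix (Fin m) (Fin n) ℝ)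
    -- dominance
    (hdom : ∀ (L : Matrix (Fin m) (Fin m) ℝ), L.PosSemidef →
      ∀ X, nuclearNorm X ≤ Ψ X L)
    (hzero : ∀ X, Ψ X 0 = nuclearNorm X)
    -- upper stability
    (hstab : ∀ L₁ L₂ : Matrix (Fin m) (Fin m) ℝ, L₁.PosSemidef → (L₂ - L₁).PosSemidef →
      ∀ X, Ψ X L₂ - Ψ X L₁ ≤ α * (L₂.trace - L₁.trace))
    -- `g` is the gradient of `Ψ(·;L)` for positive definite `L`
    (hgrad : ∀ L : Matrix (Fin m) (Fin m) ℝ, L.PosDef → ∀ X D,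
      HasDerivAt (fun t : ℝ => Ψ (X + t • D) L) (ip (g X L) D) 0)
    -- `β`-smoothness of the Bregman divergence
    (hsmooth : ∀ L : Matrix (Fin m) (Fin m) ℝ, L.PosDef → ∀ X Y,
      Ψ Y L - Ψ X L - ip (g X L) (Y - X)
        ≤ β / 2 * ((X - Y)ᵀ * L⁻¹ * (X - Y)).trace) :
    1 / 2 ≤ α * β := by
  have hm1 : (1:ℝ) ≤ (m:ℝ) := by exact_mod_cast hm
  -- α is nonnegative
  have hα : 0 ≤ α := by
    have h1 := hstab 0 1 Matrix.PosSemidef.zero (by simpa using (Matrix.PosSemidef.one)) 0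
    have h2 := hdom 1 Matrix.PosSemidef.one 0
    rw [hzero, nuclearNorm_zero] at h1
    rw [nuclearNorm_zero] at h2
    rw [Matrix.trace_one, Matrix.trace_zero] at h1
    simp only [Fintype.card_fin] at h1
    nlinarith
  -- the key inequality : ‖X‖_* ≤ α tr L + (β/2) tr(Xᵀ L⁻¹ X)
  have key : ∀ L : Matrix (Fin m) (Fin m) ℝ, L.PosDef →
      ∀ X : Matrix (Fin m) (Fin n) ℝ,
      nuclearNorm X ≤ α * L.trace + β / 2 * (Xᵀ * L⁻¹ * X).trace := by
    intro L hL X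
    have h1 := hsmooth L hL 0 X
    have h2 := hsmooth L hL 0 (-X)
    rw [show ((0:Matrix (Fin m) (Fin n) ℝ) - X) = -X by simp] at h1
    rw [show ((0:Matrix (Fin m) (Fin n) ℝ) - -X) = X by simp] at h2
    rw [show ((-X)ᵀ * L⁻¹ * (-X)) = Xᵀ * L⁻¹ * X by
      simp [Matrix.transpose_neg, Matrix.neg_mul, Matrix.mul_neg]] at h1
    have e4 : ip (g 0 L) (X - 0) + ip (g 0 L) (-X - 0) = 0 := by
      simp [ip, Matrix.mul_neg, Matrix.trace_neg]
    have h3 := hdom L hL.posSemidef X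
    have h4 := hdom L hL.posSemidef (-X)
    rw [nuclearNorm_neg] at h4
    have h5 : Ψ 0 L ≤ α * L.trace := by
      have h6 := hstab 0 L Matrix.PosSemidef.zero (by simpa using hL.posSemidef) 0
      rw [hzero, nuclearNorm_zero, Matrix.trace_zero] at h6
      linarith
    linarith
  -- specialize to X = E₁₁ and L = diag(u, ε, …, ε)
  have keyuε : ∀ u ε : ℝ, 0 < u → 0 < ε →
      1 ≤ α * (u + ((m:ℝ) - 1) * ε) + β / 2 * u⁻¹ := by
    intro u ε hu he
    set E := single (⟨0,hm⟩ : Fin m) (⟨0,hn⟩ : Fin n) (1:ℝ) with hE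
    set L := Matrix.diagonal (fun i : Fin m => if i = ⟨0,hm⟩ then u else ε) with hLdef
    have hLpd : L.PosDef := by
      rw [hLdef, Matrix.posDef_diagonal_iff]
      intro i
      split <;> assumption
    have hLtr : L.trace = u + ((m:ℝ) - 1) * ε := by
      rw [hLdef, Matrix.trace_diagonal]
      have h7 : ∀ i : Fin m, (if i = ⟨0,hm⟩ then u else ε)
          = ε + (if i = ⟨0,hm⟩ then u - ε else 0) := by
        intro i; split <;> ring
      simp only [h7, Finset.sum_add_distrib, Finset.sum_const, Finset.sum_ite_eq',
        Finset.mem_univ, if_pos, Finset.card_univ, Fintype.card_fin, nsmul_eq_mul]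
      ring
    have hLinv : L⁻¹ = Matrix.diagonal (fun i : Fin m => if i = ⟨0,hm⟩ then u⁻¹ else ε⁻¹) := by
      apply Matrix.inv_eq_right_inv
      have hd : (fun i : Fin m =>
          (if i = ⟨0,hm⟩ then u else ε) * (if i = ⟨0,hm⟩ then u⁻¹ else ε⁻¹))
          = fun _ => (1:ℝ) := by
        funext i
        split <;> field_simp
      rw [hLdef, Matrix.diagonal_mul_diagonal, hd, Matrix.diagonal_one]
    have htr : (Eᵀ * L⁻¹ * E).trace = u⁻¹ := by
      rw [hLinv, hE]
      simp only [Matrix.trace, Matrix.diag, Matrix.mul_apply, Matrix.transpose_apply,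
        Matrix.single, Matrix.diagonal_apply, Matrix.of_apply, ite_and]
      simp [Finset.mul_sum, Finset.sum_ite_eq, Finset.sum_ite_eq']
    have h8 := key L hLpd E
    rw [hE, nuclearNorm_std hm hn, ← hE, hLtr, htr] at h8
    exact h8
  -- let ε → 0
  have keyu : ∀ u : ℝ, 0 < u → 1 ≤ α * u + β / 2 * u⁻¹ := by
    intro u hu
    by_contra hlt
    push_neg at hlt
    have hcnn : 0 ≤ α * ((m:ℝ) - 1) := mul_nonneg hα (by linarith)
    have hdenpos : (0:ℝ) < 2 * (α * ((m:ℝ) - 1)) + 1 := by linarith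
    set ε := (1 - (α * u + β / 2 * u⁻¹)) / (2 * (α * ((m:ℝ) - 1)) + 1) with hεdef
    have hεpos : 0 < ε := div_pos (by linarith) hdenpos
    have h9 := keyuε u ε hu hεpos
    have h10 : 1 - (α * u + β / 2 * u⁻¹) ≤ α * ((m:ℝ) - 1) * ε := by nlinarith [h9]
    have hq : ε * (2 * (α * ((m:ℝ) - 1)) + 1) = 1 - (α * u + β / 2 * u⁻¹) := by
      rw [hεdef]
      exact div_mul_cancel₀ _ hdenpos.ne'
    nlinarith [h10, hq, mul_nonneg hεpos.le hcnn, hεpos]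
  have hαpos : 0 < α := by
    rcases eq_or_lt_of_le hα with h0 | h; swap
    · exact h
    exfalso
    have h1 := keyu 1 one_pos
    rw [← h0] at h1
    simp only [zero_mul, zero_add, inv_one, mul_one] at h1
    -- h1 : 1 ≤ β / 2, so β ≥ 2 > 0
    have hβ2 : 0 < β := by linarith
    have h2 := keyu β hβ2
    rw [← h0] at h2
    have hββ : β * β⁻¹ = 1 := mul_inv_cancel₀ (ne_of_gt hβ2)
    nlinarith
  -- conclude with u = 1 / (2α)
  have h1 := keyu (1 / (2 * α)) (by positivity)
  have e1 : α * (1 / (2 * α)) = 1 / 2 := by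
    field_simp
  have e2 : (1 / (2 * α))⁻¹ = 2 * α := by
    rw [one_div, inv_inv]
  rw [e1, e2] at h1
  nlinarith
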